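/- arXiv:2011.11468 — 2 statements merged into one kernel-verified Lean document; each statement's English description precedes it below -/
import Mathlib

section
/- Let p be a prime, let P := {x ∈ ZMod p : 0 < x < p/4} and Q := {x ∈ ZMod p : p/2 < x < p} (inequalities referring to the representatives in {0,1,…,p−1}), and set A := P ∩ Q*, where Q* := {q⁻¹ : q ∈ Q}. Then (A + A) ∩ A* = ∅, where A* := {a⁻¹ : a ∈ A}; consequently 1 ∉ A(A+A) = {a·(b+c) : a,b,c ∈ A}. -/
open Finset
open scoped Classical Pointwise

noncomputable section

/-- Set of multiplicative inverses. -/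
def inv' {p : ℕ} (A : Finset (ZMod p)) : Finset (ZMod p) := A.image (fun x => x⁻¹)

/-- For `P = {x : 0 < x < p/4}`, `Q = {x : p/2 < x < p}` and `A = P ∩ Q*`, the set
`A + A` does not meet `A*`; consequently `1 ∉ A(A+A)`. -/
theorem example_a_mul_a_add_a (p : ℕ) [Fact p.Prime]
    (P Q A : Finset (ZMod p))
    (hP : P = Finset.univ.filter fun x => 0 < (x.val : ℝ) ∧ (x.val : ℝ) < (p : ℝ) / 4)
    (hQ : Q = Finset.univ.filter fun x => (p : ℝ) / 2 < (x.val : ℝ) ∧ (x.val : ℝ) < (p : ℝ))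
    (hA : A = P ∩ inv' Q) :
    (A + A) ∩ inv' A = ∅ ∧
      ∀ a ∈ A, ∀ b ∈ A, ∀ c ∈ A, a * (b + c) ≠ 1 := by
  have hp : p.Prime := Fact.out
  have hp0 : 0 < p := hp.pos
  -- basic facts about elements of A
  have hAP : ∀ a ∈ A, 0 < (a.val : ℝ) ∧ (a.val : ℝ) < (p : ℝ) / 4 := by
    intro a ha
    rw [hA, Finset.mem_inter, hP, Finset.mem_filter] at ha
    exact ha.1.2
  have hAinv : ∀ a ∈ A, ((p : ℝ) / 2 < ((a⁻¹ : ZMod p).val : ℝ)) := by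
    intro a ha
    rw [hA, Finset.mem_inter] at ha
    obtain ⟨q, hq, hqa⟩ := Finset.mem_image.mp ha.2
    rw [hQ, Finset.mem_filter] at hq
    have hq' := hq.2
    have : a⁻¹ = q := by rw [← hqa, inv_inv]
    rw [this]
    exact hq'.1
  -- key: b + c ≠ a⁻¹
  have key : ∀ a ∈ A, ∀ b ∈ A, ∀ c ∈ A, b + c ≠ a⁻¹ := by
    intro a ha b hb c hc heq
    obtain ⟨hb0, hb4⟩ := hAP b hb
    obtain ⟨hc0, hc4⟩ := hAP c hc
    have hsum : (b.val : ℝ) + (c.val : ℝ) < (p : ℝ) / 2 := by linarith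
    have hsump : b.val + c.val < p := by
      have : ((b.val + c.val : ℕ) : ℝ) < (p : ℝ) := by push_cast; linarith
      exact_mod_cast this
    have hval : ((b + c).val : ℝ) = (b.val : ℝ) + (c.val : ℝ) := by
      rw [ZMod.val_add_of_lt hsump]; push_cast; ring
    have := hAinv a ha
    rw [← heq, hval] at this
    linarith
  constructor
  · rw [Finset.eq_empty_iff_forall_notMem]
    intro x hx
    rw [Finset.mem_inter] at hx
    obtain ⟨b, hb, c, hc, hbc⟩ := Finset.mem_add.mp hx.1
    obtain ⟨a, ha, hax⟩ := Finset.mem_image.mp hx.2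
    exact key a ha b hb c hc (by rw [hbc, hax])
  · intro a ha b hb c hc heq
    have ha0 : a ≠ 0 := by
      intro h
      have := (hAP a ha).1
      rw [h] at this
      simp at this
    exact key a ha b hb c hc (eq_inv_of_mul_eq_one_left (by rw [mul_comm]; exact heq))
end
end

section
/- Let p be a prime, let δ ∈ (0,1) and T > 1 be real parameters, and let X, Y ⊆ ZMod p with |X| = κ·p for some κ > 0. Then there exists a set E ⊆ X with |E| ≤ |X|/T such that (X \ E) ∩ (Y +_{δT/κ} Z) = ∅, where Z := (ZMod p) \ (X −_δ Y) and X −_δ Y := {x ∈ ZMod p : #{(a,b) ∈ X×Y : a−b = x} ≥ δ·p}. -/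
open Finset
open scoped Classical Pointwise

noncomputable section

/-- Partial sumset `A +_ε B`. -/
def psum {p : ℕ} [NeZero p] (A B : Finset (ZMod p)) (ε : ℝ) : Finset (ZMod p) :=
  Finset.univ.filter fun x =>
    ε * p ≤ (((A ×ˢ B).filter fun ab => ab.1 + ab.2 = x).card : ℝ)

/-- Partial difference set `A −_ε B`. -/
def pdiff {p : ℕ} [NeZero p] (A B : Finset (ZMod p)) (ε : ℝ) : Finset (ZMod p) :=
  Finset.univ.filter fun x =>
    ε * p ≤ (((A ×ˢ B).filter fun ab => ab.1 - ab.2 = x).card : ℝ)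

section Aux

variable {G : Type*} [AddCommGroup G] [DecidableEq G]

lemma card_pairs_sum (Y Z : Finset G) (x : G) :
    ((Y ×ˢ Z).filter fun ab => ab.1 + ab.2 = x).card
      = (Y.filter fun y => x - y ∈ Z).card := by
  apply Finset.card_bij' (fun ab _ => ab.1) (fun y _ => (y, x - y))
  · intro ab hab
    simp only [mem_filter, mem_product] at hab
    simp only [mem_filter]
    obtain ⟨⟨h1, h2⟩, h3⟩ := hab
    refine ⟨h1, ?_⟩
    have : x - ab.1 = ab.2 := by rw [← h3]; abel
    rwa [this]
  · intro y hy
    simp only [mem_filter] at hy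
    simp only [mem_filter, mem_product]
    exact ⟨⟨hy.1, hy.2⟩, by abel⟩
  · intro ab hab
    simp only [mem_filter, mem_product] at hab
    obtain ⟨⟨h1, h2⟩, h3⟩ := hab
    ext <;> simp
    rw [← h3]; abel
  · intro y hy; rfl

lemma card_pairs_diff (X Y : Finset G) (z : G) :
    ((X ×ˢ Y).filter fun ab => ab.1 - ab.2 = z).card
      = (X.filter fun a => a - z ∈ Y).card := by
  apply Finset.card_bij' (fun ab _ => ab.1) (fun a _ => (a, a - z))
  · intro ab hab
    simp only [mem_filter, mem_product] at hab
    simp only [mem_filter]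
    obtain ⟨⟨h1, h2⟩, h3⟩ := hab
    refine ⟨h1, ?_⟩
    have : ab.1 - z = ab.2 := by rw [← h3]; abel
    rwa [this]
  · intro a ha
    simp only [mem_filter] at ha
    simp only [mem_filter, mem_product]
    exact ⟨⟨ha.1, ha.2⟩, by abel⟩
  · intro ab hab
    simp only [mem_filter, mem_product] at hab
    obtain ⟨⟨h1, h2⟩, h3⟩ := hab
    ext <;> simp
    rw [← h3]; abel
  · intro a ha; rfl

lemma sum_fiber_sub (E Y Z : Finset G) :
    ∑ x ∈ E, (Y.filter fun y => x - y ∈ Z).card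
      = ((E ×ˢ Y).filter fun t => t.1 - t.2 ∈ Z).card := by
  rw [Finset.card_eq_sum_card_fiberwise (f := Prod.fst) (t := E)
    (fun t ht => (mem_product.mp (mem_filter.mp ht).1).1)]
  refine Finset.sum_congr rfl fun x hx => ?_
  apply Finset.card_bij' (fun y _ => (x, y)) (fun t _ => t.2)
  · intro y hy
    simp only [mem_filter] at hy
    simp only [mem_filter, mem_product]
    exact ⟨⟨⟨hx, hy.1⟩, hy.2⟩, trivial⟩
  · intro t ht
    simp only [mem_filter, mem_product] at ht
    obtain ⟨⟨⟨h1, h2⟩, h3⟩, h4⟩ := ht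
    simp only [mem_filter]
    exact ⟨h2, h4 ▸ h3⟩
  · intro y hy; rfl
  · intro t ht
    simp only [mem_filter, mem_product] at ht
    obtain ⟨⟨⟨h1, h2⟩, h3⟩, h4⟩ := ht
    exact Prod.ext h4.symm rfl

lemma sum_fiber_sub' (Z X Y : Finset G) :
    ∑ z ∈ Z, (X.filter fun a => a - z ∈ Y).card
      = ((Z ×ˢ X).filter fun t => t.2 - t.1 ∈ Y).card := by
  rw [Finset.card_eq_sum_card_fiberwise (f := Prod.fst) (t := Z)
    (fun t ht => (mem_product.mp (mem_filter.mp ht).1).1)]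
  refine Finset.sum_congr rfl fun z hz => ?_
  apply Finset.card_bij' (fun a _ => (z, a)) (fun t _ => t.2)
  · intro a ha
    simp only [mem_filter] at ha
    simp only [mem_filter, mem_product]
    exact ⟨⟨⟨hz, ha.1⟩, ha.2⟩, trivial⟩
  · intro t ht
    simp only [mem_filter, mem_product] at ht
    obtain ⟨⟨⟨h1, h2⟩, h3⟩, h4⟩ := ht
    simp only [mem_filter]
    exact ⟨h2, h4 ▸ h3⟩
  · intro a ha; rfl
  · intro t ht
    simp only [mem_filter, mem_product] at ht
    obtain ⟨⟨⟨h1, h2⟩, h3⟩, h4⟩ := ht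
    exact Prod.ext h4.symm rfl

end Aux

/-- There is an exceptional set `E ⊆ X`, `|E| ≤ |X|/T`, such that
`X \ E` avoids `Y +_{δT/κ} Z`, where `Z` is the complement of `X −_δ Y`. -/
theorem avoid_partial_sumset (p : ℕ) [Fact p.Prime] (δ T κ : ℝ)
    (hδ : δ ∈ Set.Ioo (0 : ℝ) 1) (hT : 1 < T) (hκ : 0 < κ)
    (X Y : Finset (ZMod p)) (hX : (X.card : ℝ) = κ * p) :
    ∃ E ⊆ X, (E.card : ℝ) ≤ (X.card : ℝ) / T ∧
      (X \ E) ∩ psum Y (Finset.univ \ pdiff X Y δ) (δ * T / κ) = ∅ := by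
  classical
  obtain ⟨hδ0, hδ1⟩ := hδ
  have hp : 0 < (p : ℝ) := by exact_mod_cast (Fact.out : p.Prime).pos
  have hT0 : 0 < T := lt_trans one_pos hT
  set ε : ℝ := δ * T / κ with hε
  set Z : Finset (ZMod p) := Finset.univ \ pdiff X Y δ with hZ
  set E : Finset (ZMod p) := X ∩ psum Y Z ε with hEdef
  refine ⟨E, inter_subset_left, ?_, ?_⟩
  · -- cardinality bound
    have hmemE : ∀ x ∈ E, ε * p ≤ ((Y.filter fun y => x - y ∈ Z).card : ℝ) := by
      intro x hx
      have hx' := (mem_inter.mp hx).2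
      rw [psum, mem_filter] at hx'
      rw [card_pairs_sum Y Z x] at hx'
      exact hx'.2
    have hmemZ : ∀ z ∈ Z, ((X.filter fun a => a - z ∈ Y).card : ℝ) ≤ δ * p := by
      intro z hz
      rw [hZ, mem_sdiff] at hz
      have hz' := hz.2
      rw [pdiff, mem_filter] at hz'
      push_neg at hz'
      have := hz' (mem_univ z)
      rw [card_pairs_diff X Y z] at this
      exact le_of_lt this
    -- main double counting
    have hsum1 : (E.card : ℝ) * (ε * p)
        ≤ ∑ x ∈ E, ((Y.filter fun y => x - y ∈ Z).card : ℝ) := by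
      calc (E.card : ℝ) * (ε * p) = ∑ _x ∈ E, ε * p := by
            rw [Finset.sum_const, nsmul_eq_mul]
        _ ≤ _ := Finset.sum_le_sum hmemE
    have hsum2 : ∑ z ∈ Z, ((X.filter fun a => a - z ∈ Y).card : ℝ)
        ≤ (p : ℝ) * (δ * p) := by
      calc ∑ z ∈ Z, ((X.filter fun a => a - z ∈ Y).card : ℝ)
          ≤ ∑ _z ∈ Z, δ * p := Finset.sum_le_sum hmemZ
        _ = Z.card * (δ * p) := by rw [Finset.sum_const, nsmul_eq_mul]
        _ ≤ (p : ℝ) * (δ * p) := by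
            apply mul_le_mul_of_nonneg_right _ (by positivity)
            have : Z.card ≤ p := by
              simpa [ZMod.card] using Finset.card_le_card (Finset.subset_univ Z)
            exact_mod_cast this
    have hmid : ∑ x ∈ E, ((Y.filter fun y => x - y ∈ Z).card : ℝ)
        ≤ ∑ z ∈ Z, ((X.filter fun a => a - z ∈ Y).card : ℝ) := by
      have h1 : ∑ x ∈ E, ((Y.filter fun y => x - y ∈ Z).card : ℝ)
          = (((E ×ˢ Y).filter fun t => t.1 - t.2 ∈ Z).card : ℝ) := by
        rw [← Nat.cast_sum, sum_fiber_sub]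
      have h2 : ∑ z ∈ Z, ((X.filter fun a => a - z ∈ Y).card : ℝ)
          = (((Z ×ˢ X).filter fun t => t.2 - t.1 ∈ Y).card : ℝ) := by
        rw [← Nat.cast_sum, sum_fiber_sub']
      rw [h1, h2]
      have hcard : ((E ×ˢ Y).filter fun t => t.1 - t.2 ∈ Z).card
          ≤ ((Z ×ˢ X).filter fun t => t.2 - t.1 ∈ Y).card := by
        apply Finset.card_le_card_of_injOn (fun t => (t.1 - t.2, t.1))
        · intro t ht
          simp only [Finset.mem_coe, mem_filter, mem_product] at ht ⊢
          obtain ⟨⟨h1', h2'⟩, h3'⟩ := ht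
          refine ⟨⟨h3', (mem_inter.mp h1').1⟩, ?_⟩
          · have : t.1 - (t.1 - t.2) = t.2 := by abel
            rw [this]; exact h2'
        · intro a _ b _ hab
          have h1' : a.1 = b.1 := congrArg Prod.snd hab
          have h2' : a.1 - a.2 = b.1 - b.2 := congrArg Prod.fst hab
          have : a.2 = b.2 := by
            rw [h1'] at h2'
            exact sub_right_inj.mp h2'
          exact Prod.ext h1' this
      exact_mod_cast hcard
    -- combine
    have key : (E.card : ℝ) * (ε * p) ≤ (p : ℝ) * (δ * p) :=
      hsum1.trans (hmid.trans hsum2)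
    have hε0 : 0 < ε := div_pos (mul_pos hδ0 hT0) hκ
    have hεp : 0 < ε * p := mul_pos hε0 hp
    have hE1 : (E.card : ℝ) ≤ (p : ℝ) * (δ * p) / (ε * p) :=
      (le_div_iff₀ hεp).mpr key
    have heq : (p : ℝ) * (δ * p) / (ε * p) = (X.card : ℝ) / T := by
      rw [hX, hε]
      field_simp
    exact hE1.trans_eq heq
  · -- emptiness
    ext x
    simp only [mem_inter, mem_sdiff, Finset.notMem_empty, iff_false]
    rintro ⟨⟨hxX, hxE⟩, hxP⟩
    exact hxE (mem_inter.mpr ⟨hxX, hxP⟩)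
end
end
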